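/- Let q = 2^n. Matrices A = (a b; c d) in GL_2(F_q) whose induced Möbius transformation maps the set {β : β^{2^r} = β} ∩ (roots of degree-r irreducible polynomials dividing x^{2^r}+x) into itself, in the sense that (Aα)^{2^r} = Aα whenever α^{2^r} = α and α has degree r ≥ 3 over F_q, satisfy: the equations c·a^{2^r} + a·c^{2^r} = 0, d·a^{2^r} + b·c^{2^r} + a·d^{2^r} + c·b^{2^r} = 0, b·d^{2^r} + d·b^{2^r} = 0 hold. Conversely, in PGL_2(F_q) the solutions of this system (with ad - bc ≠ 0, characteristic 2) are exactly the six matrices with entries in F_2: the identity, (0 1;1 0), (1 1;0 1), (1 0;1 1), (1 1;1 0), (0 1;1 1). -/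

import Mathlib

open Polynomial

-- char 2 from card
lemma charF2 (F : Type) [Field F] [Fintype F] (n : ℕ) (hn1 : 1 ≤ n)
    (hF : Fintype.card F = 2 ^ n) : CharP F 2 := by
  obtain ⟨p, hc⟩ := CharP.exists F
  haveI := hc
  obtain ⟨m, hp, hcard⟩ := FiniteField.card F p
  have h2 : p ∣ 2 ^ n := by rw [← hF, hcard]; exact dvd_pow_self p m.pos.ne'
  have := (Nat.Prime.dvd_of_dvd_pow hp h2)
  have hp2 : p = 2 := ((Nat.prime_dvd_prime_iff_eq hp Nat.prime_two).mp this)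
  rwa [hp2] at hc

-- fixed points of x ↦ x^(2^r) are 0,1
lemma fix2 (F : Type) [Field F] [Fintype F] (n r : ℕ) (hF : Fintype.card F = 2 ^ n)
    (hrn : Nat.gcd r n = 1) (hr1 : 1 ≤ r) (hn1 : 1 < n)
    (x : F) (hx : x ^ 2 ^ r = x) : x = 0 ∨ x = 1 := by
  obtain ⟨u, -, hu⟩ := Nat.exists_mul_mod_eq_one_of_coprime hrn hn1
  have hru : r * u = n * (r * u / n) + 1 := by
    conv_lhs => rw [← Nat.div_add_mod (r * u) n, hu]
  set v := r * u / n with hv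
  have h1 : ∀ k : ℕ, x ^ 2 ^ (r * k) = x := by
    intro k
    induction k with
    | zero => simp
    | succ k ih =>
      have : r * (k + 1) = r * k + r := by ring
      rw [this, pow_add, pow_mul, ih, hx]
  have h2 : ∀ (y : F) (k : ℕ), y ^ 2 ^ (n * k + 1) = y ^ 2 := by
    intro y k
    induction k with
    | zero => simp
    | succ k ih =>
      have h3 : n * (k + 1) + 1 = n + (n * k + 1) := by ring
      have h4 : y ^ 2 ^ n = y := by rw [← hF]; exact FiniteField.pow_card _
      rw [h3, pow_add, mul_comm, pow_mul, ih, pow_right_comm, h4]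
  have hx2 : x ^ 2 = x := by
    rw [← h2 x v, ← hru, h1 u]
  have : x * (x - 1) = 0 := by ring_nf; linear_combination hx2
  rcases mul_eq_zero.mp this with h | h
  · exact Or.inl h
  · exact Or.inr (sub_eq_zero.mp h)

-- key divisibility lemma
lemma keylem (F : Type) [Field F] [Fintype F] (n r : ℕ) (hF : Fintype.card F = 2 ^ n)
    (hrn : Nat.gcd r n = 1) (hr1 : 1 ≤ r) (hn1 : 1 < n)
    (x y : F) (hy : y ≠ 0) (h : x * y ^ 2 ^ r + y * x ^ 2 ^ r = 0) : x = 0 ∨ x = y := by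
  haveI : CharP F 2 := charF2 F n (le_of_lt hn1) hF
  have hyQ : y ^ 2 ^ r ≠ 0 := pow_ne_zero _ hy
  have ht : (x / y) ^ 2 ^ r = x / y := by
    rw [div_pow, div_eq_div_iff hyQ hy]
    have htwo : (2 : F) = 0 := CharTwo.two_eq_zero
    linear_combination h - x * y ^ (2 ^ r) * htwo
  rcases fix2 F n r hF hrn hr1 hn1 _ ht with h0 | h1
  · exact Or.inl (by rwa [_root_.div_eq_zero_iff, or_iff_left hy] at h0)
  · exact Or.inr (by field_simp at h1; exact h1)

-- small poly vanishing
lemma polyaux (F K : Type) [Field F] [Field K] [Algebra F K] (α : K) (P : Polynomial F)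
    (hP : Polynomial.aeval α P = 0) (hd : P.natDegree < (minpoly F α).natDegree) : P = 0 := by
  by_contra h
  have := Polynomial.natDegree_le_of_dvd (minpoly.dvd F α hP) h
  omega



/-- Let `q = 2^n` (`n ≥ 5` prime), `r ≥ 3` with `gcd(r,n) = 1`, and let `α` (in an extension
`K` of `F_q`) have degree `r` over `F_q` and satisfy `α^{2^r} = α`.  For a matrix
`A = (a b; c d)` with `ad - bc ≠ 0`: if the Möbius image `A·α = (aα+b)/(cα+d)` again satisfies
`(A·α)^{2^r} = A·α`, then the three equations
`c·a^{2^r} + a·c^{2^r} = 0`, `d·a^{2^r} + b·c^{2^r} + a·d^{2^r} + c·b^{2^r} = 0`,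
`b·d^{2^r} + d·b^{2^r} = 0` hold; and conversely, the invertible solutions of this system are,
up to a nonzero scalar, exactly the six matrices with entries in `F_2`:
`(1 0;0 1), (0 1;1 0), (1 1;0 1), (1 0;1 1), (1 1;1 0), (0 1;1 1)`. -/
theorem stmt_3 (n r : ℕ) (hn : n.Prime) (hn5 : 5 ≤ n) (hr : 3 ≤ r)
    (hrn : Nat.gcd r n = 1)
    (F K : Type) [Field F] [Fintype F] [Field K] [Algebra F K]
    (hF : Fintype.card F = 2 ^ n)
    (a b c d : F) (hdet : a * d - b * c ≠ 0)
    (α : K) (hdeg : (minpoly F α).natDegree = r) (hfix : α ^ 2 ^ r = α) :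
    (((algebraMap F K a * α + algebraMap F K b) /
          (algebraMap F K c * α + algebraMap F K d)) ^ 2 ^ r
        = (algebraMap F K a * α + algebraMap F K b) /
            (algebraMap F K c * α + algebraMap F K d) →
      (c * a ^ 2 ^ r + a * c ^ 2 ^ r = 0 ∧
       d * a ^ 2 ^ r + b * c ^ 2 ^ r + a * d ^ 2 ^ r + c * b ^ 2 ^ r = 0 ∧
       b * d ^ 2 ^ r + d * b ^ 2 ^ r = 0)) ∧
    ((c * a ^ 2 ^ r + a * c ^ 2 ^ r = 0 ∧
      d * a ^ 2 ^ r + b * c ^ 2 ^ r + a * d ^ 2 ^ r + c * b ^ 2 ^ r = 0 ∧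
      b * d ^ 2 ^ r + d * b ^ 2 ^ r = 0) ↔
      ∃ lam : F, lam ≠ 0 ∧
        ((a, b, c, d) = (lam, 0, 0, lam) ∨ (a, b, c, d) = (0, lam, lam, 0) ∨
         (a, b, c, d) = (lam, lam, 0, lam) ∨ (a, b, c, d) = (lam, 0, lam, lam) ∨
         (a, b, c, d) = (lam, lam, lam, 0) ∨ (a, b, c, d) = (0, lam, lam, lam))) := by
  have hn1 : 1 < n := by omega
  haveI hch : CharP F 2 := charF2 F n (by omega) hF
  haveI : Fact (Nat.Prime 2) := ⟨Nat.prime_two⟩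
  have htwo : (2 : F) = 0 := CharTwo.two_eq_zero
  have hQne : (2 : ℕ) ^ r ≠ 0 := by positivity
  constructor
  · -- forward direction using α
    intro h
    have finj : Function.Injective (algebraMap F K) := (algebraMap F K).injective
    haveI : CharP K 2 := charP_of_injective_algebraMap finj 2
    have hden : algebraMap F K c * α + algebraMap F K d ≠ 0 := by
      intro h0
      have hP0 : Polynomial.aeval α (Polynomial.C c * Polynomial.X + Polynomial.C d) = 0 := by
        simpa using h0
      have hdlt : (Polynomial.C c * Polynomial.X + Polynomial.C d).natDegree
          < (minpoly F α).natDegree := by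
        rw [hdeg]
        have h1 : (Polynomial.C c * Polynomial.X + Polynomial.C d).natDegree ≤ 1 := by
          compute_degree
        omega
      have hz := polyaux F K α _ hP0 hdlt
      have hc0 : c = 0 := by
        have := congrArg (fun p => Polynomial.coeff p 1) hz; simpa using this
      have hd0 : d = 0 := by
        have := congrArg (fun p => Polynomial.coeff p 0) hz; simpa using this
      exact hdet (by rw [hc0, hd0]; ring)
    have hNpow : (algebraMap F K a * α + algebraMap F K b) ^ 2 ^ r
        = algebraMap F K (a ^ 2 ^ r) * α + algebraMap F K (b ^ 2 ^ r) := by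
      rw [add_pow_char_pow, mul_pow, hfix, map_pow, map_pow]
    have hDpow : (algebraMap F K c * α + algebraMap F K d) ^ 2 ^ r
        = algebraMap F K (c ^ 2 ^ r) * α + algebraMap F K (d ^ 2 ^ r) := by
      rw [add_pow_char_pow, mul_pow, hfix, map_pow, map_pow]
    rw [div_pow, div_eq_div_iff (pow_ne_zero _ hden) hden, hNpow, hDpow] at h
    simp only [map_pow] at h
    have htwoK : (2 : K) = 0 := CharTwo.two_eq_zero
    have haeval : Polynomial.aeval α
        (Polynomial.C (c * a ^ 2 ^ r + a * c ^ 2 ^ r) * Polynomial.X ^ 2 +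
         Polynomial.C (d * a ^ 2 ^ r + b * c ^ 2 ^ r + a * d ^ 2 ^ r + c * b ^ 2 ^ r) *
           Polynomial.X +
         Polynomial.C (b * d ^ 2 ^ r + d * b ^ 2 ^ r)) = 0 := by
      simp only [map_add, map_mul, map_pow, Polynomial.aeval_C, Polynomial.aeval_X]
      linear_combination h + (algebraMap F K a * (algebraMap F K c) ^ 2 ^ r * α ^ 2 +
        (algebraMap F K a * (algebraMap F K d) ^ 2 ^ r +
         algebraMap F K b * (algebraMap F K c) ^ 2 ^ r) * α +
        algebraMap F K b * (algebraMap F K d) ^ 2 ^ r) * htwoK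
    have hdlt2 : (Polynomial.C (c * a ^ 2 ^ r + a * c ^ 2 ^ r) * Polynomial.X ^ 2 +
         Polynomial.C (d * a ^ 2 ^ r + b * c ^ 2 ^ r + a * d ^ 2 ^ r + c * b ^ 2 ^ r) *
           Polynomial.X +
         Polynomial.C (b * d ^ 2 ^ r + d * b ^ 2 ^ r)).natDegree
        < (minpoly F α).natDegree := by
      rw [hdeg]
      have h2 : (Polynomial.C (c * a ^ 2 ^ r + a * c ^ 2 ^ r) * Polynomial.X ^ 2 +
         Polynomial.C (d * a ^ 2 ^ r + b * c ^ 2 ^ r + a * d ^ 2 ^ r + c * b ^ 2 ^ r) *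
           Polynomial.X +
         Polynomial.C (b * d ^ 2 ^ r + d * b ^ 2 ^ r)).natDegree ≤ 2 := by
        compute_degree
      omega
    have hz := polyaux F K α _ haeval hdlt2
    refine ⟨?_, ?_, ?_⟩
    · have hco := congrArg (fun p => Polynomial.coeff p 2) hz
      simp only [Polynomial.coeff_add, Polynomial.coeff_C_mul, Polynomial.coeff_X_pow,
        Polynomial.coeff_X, Polynomial.coeff_C, Polynomial.coeff_zero] at hco
      simpa using hco
    · have hco := congrArg (fun p => Polynomial.coeff p 1) hz
      simp only [Polynomial.coeff_add, Polynomial.coeff_C_mul, Polynomial.coeff_X_pow,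
        Polynomial.coeff_X, Polynomial.coeff_C, Polynomial.coeff_zero] at hco
      simpa using hco
    · have hco := congrArg (fun p => Polynomial.coeff p 0) hz
      simp only [Polynomial.coeff_add, Polynomial.coeff_C_mul, Polynomial.coeff_X_pow,
        Polynomial.coeff_X, Polynomial.coeff_C, Polynomial.coeff_zero] at hco
      simpa using hco
  · constructor
    · rintro ⟨e1, e2, e3⟩
      have key : ∀ x y : F, y ≠ 0 → x * y ^ 2 ^ r + y * x ^ 2 ^ r = 0 → x = 0 ∨ x = y :=
        fun x y hy h => keylem F n r hF hrn (by omega) hn1 x y hy h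
      by_cases hc : c = 0
      · subst hc
        have hd0 : d ≠ 0 := fun h => hdet (by rw [h]; ring)
        have ha0 : a ≠ 0 := fun h => hdet (by rw [h]; ring)
        simp only [zero_pow hQne, mul_zero, zero_mul, add_zero, zero_add] at e2 e3
        have had : a = d := (key a d hd0 (by linear_combination e2)).resolve_left ha0
        rcases key b d hd0 (by linear_combination e3) with hb | hb
        · exact ⟨d, hd0, Or.inl (by rw [had, hb])⟩
        · exact ⟨d, hd0, Or.inr (Or.inr (Or.inl (by rw [had, hb])))⟩
      · by_cases ha : a = 0
        · subst ha
          have hb0 : b ≠ 0 := fun h => hdet (by rw [h]; ring)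
          simp only [zero_pow hQne, mul_zero, zero_mul, add_zero, zero_add] at e2 e3
          have hbc : b = c := (key b c hc (by linear_combination e2)).resolve_left hb0
          rcases key d b hb0 (by linear_combination e3) with hdb | hdb
          · exact ⟨b, hb0, Or.inr (Or.inl (by rw [← hbc, hdb]))⟩
          · exact ⟨b, hb0, Or.inr (Or.inr (Or.inr (Or.inr (Or.inr (by rw [← hbc, hdb])))))⟩
        · have hac : a = c := (key a c hc (by linear_combination e1)).resolve_left ha
          subst hac
          have hbdpow : (b + d) ^ 2 ^ r = b ^ 2 ^ r + d ^ 2 ^ r := add_pow_char_pow b d 2 r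
          have hs : (b + d) * a ^ 2 ^ r + a * (b + d) ^ 2 ^ r = 0 := by
            rw [hbdpow]; linear_combination e2
          rcases key (b + d) a ha hs with hbd | hbd
          · have hbd' : b = d := by linear_combination hbd - d * htwo
            exact absurd (by rw [hbd']; ring) hdet
          · by_cases hdz : d = 0
            · subst hdz
              have hb : b = a := by linear_combination hbd
              exact ⟨a, ha, Or.inr (Or.inr (Or.inr (Or.inr (Or.inl (by rw [hb])))))⟩
            · rcases key b d hdz (by linear_combination e3) with hb | hb
              · have hd : d = a := by rw [hb] at hbd; linear_combination hbd
                exact ⟨a, ha, Or.inr (Or.inr (Or.inr (Or.inl (by rw [hb, hd]))))⟩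
              · exfalso
                rw [hb, CharTwo.add_self_eq_zero] at hbd
                exact ha hbd.symm
    · rintro ⟨lam, hl, (h | h | h | h | h | h)⟩ <;>
        obtain ⟨rfl, rfl, rfl, rfl⟩ :=
          (by simpa [Prod.ext_iff] using h : _ ∧ _ ∧ _ ∧ _) <;>
        refine ⟨?_, ?_, ?_⟩ <;>
        simp [zero_pow hQne, CharTwo.add_self_eq_zero]
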